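/- Let z_1,...,z_k ∈ [0,1] with Σ_i z_i ≤ 1. In the random-order contention resolution scheme of Lee and Singla, each element i draws Y_i uniformly at random from [0,1] independently; elements are processed in increasing order of Y_i; each element i is independently active with probability z_i; the first active element i reached is selected independently with probability exp(-Y_i z_i), and if not selected, processing continues. Then for every element i, the probability that i is selected, conditioned on i being active, is at least 1 - 1/e. -/

import Mathlib

open MeasureTheory Set Function ENNReal

noncomputable def unifM : Measure ℝ := volume.restrict (Set.Icc 0 1)

instance : IsProbabilityMeasure unifM := ⟨by simp [unifM, Real.volume_Icc]⟩

lemma unifM_Iic {a : ℝ} (h0 : 0 ≤ a) (h1 : a ≤ 1) :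
    unifM (Set.Iic a) = ENNReal.ofReal a := by
  rw [unifM, Measure.restrict_apply measurableSet_Iic]
  have : Set.Iic a ∩ Set.Icc 0 1 = Set.Icc 0 a := by
    ext x; simp only [Set.mem_inter_iff, Set.mem_Iic, Set.mem_Icc]
    constructor
    · rintro ⟨h, h2, _⟩; exact ⟨h2, h⟩
    · rintro ⟨h2, h⟩; exact ⟨h, h2, le_trans h h1⟩
  rw [this, Real.volume_Icc, sub_zero]

lemma unifM_Ioi {a : ℝ} (h0 : 0 ≤ a) (h1 : a ≤ 1) :
    unifM (Set.Ioi a) = ENNReal.ofReal (1 - a) := by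
  rw [unifM, Measure.restrict_apply measurableSet_Ioi]
  have : Set.Ioi a ∩ Set.Icc 0 1 = Set.Ioc a 1 := by
    ext x; simp only [Set.mem_inter_iff, Set.mem_Ioi, Set.mem_Icc, Set.mem_Ioc]
    constructor
    · rintro ⟨h, _, h3⟩; exact ⟨h, h3⟩
    · rintro ⟨h, h3⟩; exact ⟨h, le_trans h0 h.le, h3⟩
  rw [this, Real.volume_Ioc]

def Ssel (k : ℕ) (z : Fin k → ℝ) (i : Fin k) (A : Fin k → Bool) :
    Set ((Fin k → ℝ) × (Fin k → ℝ)) :=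
  {p | A i = true ∧ p.2 i ≤ Real.exp (-(p.1 i * z i)) ∧
    ∀ j, p.1 j < p.1 i → ¬(A j = true ∧ p.2 j ≤ Real.exp (-(p.1 j * z j)))}

lemma Ssel_measurable (k : ℕ) (z : Fin k → ℝ) (i : Fin k) (A : Fin k → Bool) :
    MeasurableSet (Ssel k z i A) := by
  have hle : ∀ j : Fin k, MeasurableSet
      {p : (Fin k → ℝ) × (Fin k → ℝ) | p.2 j ≤ Real.exp (-(p.1 j * z j))} := fun j =>
    measurableSet_le measurable_snd.eval
      (by fun_prop)
  have hlt : ∀ j : Fin k, MeasurableSet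
      {p : (Fin k → ℝ) × (Fin k → ℝ) | p.1 j < p.1 i} := fun j =>
    measurableSet_lt measurable_fst.eval measurable_fst.eval
  have hrep : Ssel k z i A = {p : (Fin k → ℝ) × (Fin k → ℝ) | A i = true} ∩
      ({p : (Fin k → ℝ) × (Fin k → ℝ) | p.2 i ≤ Real.exp (-(p.1 i * z i))} ∩
        ⋂ j, ({p : (Fin k → ℝ) × (Fin k → ℝ) | p.1 j < p.1 i} ∩
          ({p : (Fin k → ℝ) × (Fin k → ℝ) | A j = true} ∩
            {p : (Fin k → ℝ) × (Fin k → ℝ) | p.2 j ≤ Real.exp (-(p.1 j * z j))}))ᶜ) := by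
    ext p
    simp only [Ssel, Set.mem_setOf_eq, Set.mem_inter_iff, Set.mem_iInter, Set.mem_compl_iff,
      not_and]
  rw [hrep]
  exact (MeasurableSet.const _).inter ((hle i).inter (MeasurableSet.iInter fun j =>
    ((hlt j).inter ((MeasurableSet.const _).inter (hle j))).compl))

lemma slice_empty {k : ℕ} {z : Fin k → ℝ} {i : Fin k} {A : Fin k → Bool} (Y : Fin k → ℝ)
    (hA : ¬ A i = true) : Prod.mk Y ⁻¹' Ssel k z i A = ∅ := by
  ext U; simp [Ssel, hA]

lemma slice_eq {k : ℕ} {z : Fin k → ℝ} {i : Fin k} {A : Fin k → Bool} (Y : Fin k → ℝ)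
    (hA : A i = true) :
    Prod.mk Y ⁻¹' Ssel k z i A = Set.pi Set.univ (fun j =>
      if j = i then Set.Iic (Real.exp (-(Y i * z i)))
      else if A j = true ∧ Y j < Y i then Set.Ioi (Real.exp (-(Y j * z j))) else Set.univ) := by
  ext U
  simp only [Set.mem_preimage, Ssel, Set.mem_setOf_eq, hA, true_and, Set.mem_pi, Set.mem_univ,
    forall_true_left]
  constructor
  · rintro ⟨hUi, hall⟩ j
    by_cases h1 : j = i
    · subst h1; rw [if_pos rfl]; exact hUi
    · rw [if_neg h1]
      by_cases h2 : A j = true ∧ Y j < Y i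
      · rw [if_pos h2]
        exact lt_of_not_ge fun hle => hall j h2.2 ⟨h2.1, hle⟩
      · rw [if_neg h2]; trivial
  · intro h
    constructor
    · have := h i; rwa [if_pos rfl] at this
    · intro j hYj
      rintro ⟨hAj, hUj⟩
      rcases eq_or_ne j i with rfl | hne
      · exact absurd hYj (lt_irrefl _)
      · have := h j
        rw [if_neg hne, if_pos ⟨hAj, hYj⟩] at this
        exact absurd hUj (not_le.2 this)

lemma slice_measure {k : ℕ} (z : Fin k → ℝ) (i : Fin k) (hz : ∀ j, z j ∈ Set.Icc (0:ℝ) 1)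
    (A : Fin k → Bool) (Y : Fin k → ℝ) (hY : ∀ j, Y j ∈ Set.Icc (0:ℝ) 1) :
    (Measure.pi fun _ : Fin k => unifM) (Prod.mk Y ⁻¹' Ssel k z i A)
      = if A i = true then
          ∏ j, (if j = i then ENNReal.ofReal (Real.exp (-(Y i * z i)))
            else if A j = true ∧ Y j < Y i then
              ENNReal.ofReal (1 - Real.exp (-(Y j * z j))) else 1)
        else 0 := by
  have he1 : ∀ l, Real.exp (-(Y l * z l)) ≤ 1 := fun l =>
    Real.exp_le_one_iff.2 (neg_nonpos.2 (mul_nonneg (hY l).1 (hz l).1))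
  by_cases hA : A i = true
  · rw [if_pos hA, slice_eq Y hA, Measure.pi_pi]
    refine Finset.prod_congr rfl fun j _ => ?_
    by_cases h1 : j = i
    · subst h1; rw [if_pos rfl, if_pos rfl]
      exact unifM_Iic (Real.exp_pos _).le (he1 j)
    · rw [if_neg h1, if_neg h1]
      by_cases h2 : A j = true ∧ Y j < Y i
      · rw [if_pos h2, if_pos h2]
        exact unifM_Ioi (Real.exp_pos _).le (he1 j)
      · rw [if_neg h2, if_neg h2]
        exact measure_univ
  · rw [if_neg hA, slice_empty Y hA, measure_empty]

lemma sum_slice {k : ℕ} (z : Fin k → ℝ) (i : Fin k) (hz : ∀ j, z j ∈ Set.Icc (0:ℝ) 1)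
    (Y : Fin k → ℝ) (hY : ∀ j, Y j ∈ Set.Icc (0:ℝ) 1) :
    ∑ A : Fin k → Bool, ENNReal.ofReal (∏ j, if A j then z j else 1 - z j) *
        (Measure.pi fun _ : Fin k => unifM) (Prod.mk Y ⁻¹' Ssel k z i A)
      = ENNReal.ofReal (z i * Real.exp (-(Y i * z i))) *
          ∏ j ∈ Finset.univ.erase i,
            (if Y j < Y i then ENNReal.ofReal (1 - z j * Real.exp (-(Y j * z j))) else 1) := by
  classical
  have hw : ∀ (A : Fin k → Bool) (j : Fin k), (0:ℝ) ≤ if A j then z j else 1 - z j := by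
    intro A j
    by_cases h : A j <;> simp [h, (hz j).1, sub_nonneg.2 (hz j).2]
  have he1 : ∀ l, Real.exp (-(Y l * z l)) ≤ 1 := fun l =>
    Real.exp_le_one_iff.2 (neg_nonpos.2 (mul_nonneg (hY l).1 (hz l).1))
  set F : Fin k → Bool → ℝ≥0∞ := fun j b =>
    if j = i then
      (if b then ENNReal.ofReal (z i) * ENNReal.ofReal (Real.exp (-(Y i * z i))) else 0)
    else ENNReal.ofReal (if b then z j else 1 - z j) *
      (if b = true ∧ Y j < Y i then ENNReal.ofReal (1 - Real.exp (-(Y j * z j))) else 1)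
    with hF
  have hterm : ∀ A : Fin k → Bool,
      ENNReal.ofReal (∏ j, if A j then z j else 1 - z j) *
        (Measure.pi fun _ : Fin k => unifM) (Prod.mk Y ⁻¹' Ssel k z i A)
      = ∏ j, F j (A j) := by
    intro A
    rw [slice_measure z i hz A Y hY]
    by_cases hA : A i = true
    · rw [if_pos hA, ENNReal.ofReal_prod_of_nonneg (fun j _ => hw A j),
        ← Finset.prod_mul_distrib]
      refine Finset.prod_congr rfl fun j _ => ?_
      by_cases hj : j = i
      · subst hj
        rw [hF]
        simp only [if_pos rfl, hA, if_true]
      · rw [hF]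
        simp only [if_neg hj]
    · rw [if_neg hA, mul_zero]
      refine (Finset.prod_eq_zero (Finset.mem_univ i) ?_).symm
      rw [Bool.not_eq_true] at hA
      rw [hF]
      simp [hA]
  rw [Finset.sum_congr rfl fun A _ => hterm A, ← Fintype.prod_sum]
  have hsum : ∀ j, (∑ b : Bool, F j b) =
      (if j = i then ENNReal.ofReal (z i * Real.exp (-(Y i * z i)))
       else (if Y j < Y i then ENNReal.ofReal (1 - z j * Real.exp (-(Y j * z j))) else 1)) := by
    intro j
    rw [Fintype.sum_bool, hF]
    simp only [Bool.false_eq_true, false_and, ite_false, ite_true, add_zero, mul_one]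
    by_cases hj : j = i
    · subst hj
      rw [← ENNReal.ofReal_mul (hz j).1]
      simp
    · simp only [if_neg hj, true_and]
      by_cases hlt : Y j < Y i
      · rw [if_pos hlt, if_pos hlt, ← ENNReal.ofReal_mul (hz j).1, ← ENNReal.ofReal_add
          (mul_nonneg (hz j).1 (sub_nonneg.2 (he1 j))) (sub_nonneg.2 (hz j).2)]
        congr 1
        ring
      · rw [if_neg hlt, if_neg hlt, mul_one, ← ENNReal.ofReal_add (hz j).1
          (sub_nonneg.2 (hz j).2)]
        simp
  rw [Finset.prod_congr rfl fun j _ => hsum j,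
    ← Finset.mul_prod_erase Finset.univ _ (Finset.mem_univ i), if_pos rfl]
  congr 1
  exact Finset.prod_congr rfl fun j hj => by rw [if_neg (Finset.ne_of_mem_erase hj)]
lemma lmarginal_congr_of_agree {k : ℕ} {s : Finset (Fin k)} (f f' : (Fin k → ℝ) → ℝ≥0∞)
    (x : Fin k → ℝ) (h : ∀ Y, (∀ j ∉ s, Y j = x j) → f Y = f' Y) :
    (∫⋯∫⁻_s, f ∂(fun _ => unifM)) x = (∫⋯∫⁻_s, f' ∂(fun _ => unifM)) x := by
  simp only [lmarginal]
  exact lintegral_congr fun y => h _ fun j hj => by simp [updateFinset_def, hj]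

lemma lmarginal_const_mul' {k : ℕ} {s : Finset (Fin k)} (c : ℝ≥0∞) (f : (Fin k → ℝ) → ℝ≥0∞)
    (hf : Measurable f) (x : Fin k → ℝ) :
    (∫⋯∫⁻_s, (fun Y => c * f Y) ∂(fun _ => unifM)) x
      = c * (∫⋯∫⁻_s, f ∂(fun _ => unifM)) x := by
  simp only [lmarginal]
  exact lintegral_const_mul c (hf.comp measurable_updateFinset)

lemma lmarginal_prod_eq {k : ℕ} (g : Fin k → ℝ → ℝ≥0∞) (hg : ∀ j, Measurable (g j))
    (s : Finset (Fin k)) (x : Fin k → ℝ) :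
    (∫⋯∫⁻_s, (fun Y => ∏ j ∈ s, g j (Y j)) ∂(fun _ => unifM)) x
      = ∏ j ∈ s, ∫⁻ t, g j t ∂unifM := by
  classical
  induction s using Finset.induction_on generalizing x with
  | empty => simp
  | @insert a s ha ih =>
    have hmeas : Measurable fun Y : Fin k → ℝ => ∏ j ∈ insert a s, g j (Y j) :=
      Finset.measurable_prod _ fun j _ => (hg j).comp (measurable_pi_apply j)
    rw [lmarginal_insert _ hmeas ha]
    have hstep : ∀ t : ℝ,
        (∫⋯∫⁻_s, (fun Y => ∏ j ∈ insert a s, g j (Y j)) ∂(fun _ => unifM))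
            (Function.update x a t)
          = g a t * ∏ j ∈ s, ∫⁻ u, g j u ∂unifM := by
      intro t
      rw [lmarginal_congr_of_agree _ (fun Y => g a t * ∏ j ∈ s, g j (Y j)) _ ?_]
      · have hms : Measurable fun Y : Fin k → ℝ => ∏ j ∈ s, g j (Y j) :=
          Finset.measurable_prod _ fun j _ => (hg j).comp (measurable_pi_apply j)
        rw [lmarginal_const_mul' (g a t) _ hms, ih]
      · intro Y hY
        rw [Finset.prod_insert ha, hY a ha]
        simp
    simp_rw [hstep]
    rw [lintegral_mul_const _ (hg a), Finset.prod_insert ha]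

lemma lintegral_pi_split {k : ℕ} (i : Fin k) (u : ℝ → ℝ≥0∞) (φ : Fin k → ℝ → ℝ → ℝ≥0∞)
    (hu : Measurable u) (hφ : ∀ j, Measurable (fun p : ℝ × ℝ => φ j p.1 p.2)) :
    ∫⁻ Y, u (Y i) * ∏ j ∈ Finset.univ.erase i, φ j (Y i) (Y j)
        ∂(Measure.pi fun _ : Fin k => unifM)
      = ∫⁻ y, u y * ∏ j ∈ Finset.univ.erase i, (∫⁻ t, φ j y t ∂unifM) ∂unifM := by
  classical
  have hmeas : Measurable fun Y : Fin k → ℝ =>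
      u (Y i) * ∏ j ∈ Finset.univ.erase i, φ j (Y i) (Y j) := by
    apply Measurable.mul (hu.comp (measurable_pi_apply i))
    exact Finset.measurable_prod _ fun j _ =>
      show Measurable ((fun p : ℝ × ℝ => φ j p.1 p.2) ∘ fun a : Fin k → ℝ => (a i, a j)) from
        (hφ j).comp ((measurable_pi_apply i).prodMk (measurable_pi_apply j))
  rw [lintegral_eq_lmarginal_univ (fun _ => (0:ℝ)),
    lmarginal_erase _ hmeas (Finset.mem_univ i)]
  apply lintegral_congr
  intro y
  have hms : Measurable fun Y : Fin k → ℝ => ∏ j ∈ Finset.univ.erase i, φ j y (Y j) :=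
    Finset.measurable_prod _ fun j _ =>
      show Measurable ((fun p : ℝ × ℝ => φ j p.1 p.2) ∘ fun a : Fin k → ℝ => (y, a j)) from
        (hφ j).comp (measurable_const.prodMk (measurable_pi_apply j))
  rw [lmarginal_congr_of_agree _ (fun Y => u y * ∏ j ∈ Finset.univ.erase i, φ j y (Y j)) _ ?_]
  · rw [lmarginal_const_mul' _ _ hms,
      lmarginal_prod_eq (fun j t => φ j y t)
        (fun j => (hφ j).comp (measurable_const.prodMk measurable_id))]
  · intro Y hY
    have : Y i = y := by
      rw [hY i (Finset.notMem_erase i _)]; simp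
    rw [this]
lemma exp_antideriv (c : ℝ) (t : ℝ) :
    HasDerivAt (fun s : ℝ => -Real.exp (-(s * c))) (c * Real.exp (-(t * c))) t := by
  have h1 : HasDerivAt (fun s : ℝ => -(s * c)) (-c) t := by
    simpa using ((hasDerivAt_id t).mul_const c).fun_neg
  have h2 := (Real.hasDerivAt_exp (-(t * c))).comp t h1
  rw [show c * Real.exp (-(t * c)) = -(Real.exp (-(t * c)) * -c) by ring]
  exact h2.fun_neg

lemma integral_c_exp (c : ℝ) (y : ℝ) :
    ∫ t in (0:ℝ)..y, c * Real.exp (-(t * c)) = 1 - Real.exp (-(y * c)) := by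
  rw [intervalIntegral.integral_eq_sub_of_hasDerivAt (fun t _ => exp_antideriv c t)
    (Continuous.intervalIntegrable (by continuity) _ _)]
  simp only [Real.exp_zero, zero_mul, neg_zero]
  ring

lemma one_sub_exp_le (x : ℝ) : 1 - Real.exp (-x) ≤ x := by
  have := Real.add_one_le_exp (-x)
  linarith

lemma inner_int {c y : ℝ} (hc : c ∈ Set.Icc (0:ℝ) 1) (hy : y ∈ Set.Icc (0:ℝ) 1) :
    ∫⁻ t, (if t < y then ENNReal.ofReal (1 - c * Real.exp (-(t * c))) else 1) ∂unifM
      = ENNReal.ofReal (Real.exp (-(y * c))) := by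
  have hy0 : (0:ℝ) ≤ y := hy.1
  have hy1 : y ≤ 1 := hy.2
  have hsplit : Set.Ico (0:ℝ) y ∪ Set.Icc y 1 = Set.Icc 0 1 :=
    Set.Ico_union_Icc_eq_Icc hy0 hy1
  have hdisj : Disjoint (Set.Ico (0:ℝ) y) (Set.Icc y 1) :=
    Set.disjoint_left.mpr fun t ht ht' => absurd ht.2 (not_lt.2 ht'.1)
  rw [show unifM = volume.restrict (Set.Icc 0 1) from rfl, ← hsplit,
    lintegral_union measurableSet_Icc hdisj]
  have h1 : ∫⁻ t in Set.Ico (0:ℝ) y,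
      (if t < y then ENNReal.ofReal (1 - c * Real.exp (-(t * c))) else 1) ∂volume
      = ENNReal.ofReal (y - (1 - Real.exp (-(y * c)))) := by
    rw [setLIntegral_congr_fun measurableSet_Ico
      (fun t (ht : t ∈ Set.Ico (0:ℝ) y) => if_pos ht.2)]
    rw [← ofReal_integral_eq_lintegral_ofReal]
    · rw [setIntegral_congr_set Ico_ae_eq_Ioc, ← intervalIntegral.integral_of_le hy0,
        intervalIntegral.integral_sub (intervalIntegrable_const)
          (Continuous.intervalIntegrable (by continuity) _ _),
        integral_c_exp]
      simp
    · exact (Continuous.integrableOn_Icc (by continuity)).mono_set Set.Ico_subset_Icc_self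
    · refine (ae_restrict_iff' measurableSet_Ico).2 (ae_of_all _ fun t ht => ?_)
      have h2 : Real.exp (-(t * c)) ≤ 1 :=
        Real.exp_le_one_iff.2 (by nlinarith [ht.1, hc.1] : -(t * c) ≤ 0)
      have h3 : c * Real.exp (-(t * c)) ≤ 1 := by
        nlinarith [Real.exp_pos (-(t * c)), hc.1, hc.2]
      simpa using h3
  have h2 : ∫⁻ t in Set.Icc y 1,
      (if t < y then ENNReal.ofReal (1 - c * Real.exp (-(t * c))) else 1) ∂volume
      = ENNReal.ofReal (1 - y) := by
    rw [setLIntegral_congr_fun measurableSet_Icc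
      (fun t (ht : t ∈ Set.Icc y 1) => if_neg (not_lt.2 ht.1))]
    simp [Real.volume_Icc]
  rw [h1, h2, ← ENNReal.ofReal_add]
  · congr 1; ring
  · have h3 : 1 - Real.exp (-(y * c)) ≤ y * c := one_sub_exp_le _
    nlinarith [hc.1, hc.2]
  · linarith

lemma last_step (c S : ℝ) (hc : 0 ≤ c) (hS0 : 0 ≤ S) (hS1 : S ≤ 1) :
    ENNReal.ofReal ((1 - 1/Real.exp 1) * c)
      ≤ ∫⁻ y, ENNReal.ofReal (c * Real.exp (-(y * S))) ∂unifM := by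
  have hcomp : ∫⁻ y, ENNReal.ofReal (c * Real.exp (-y)) ∂unifM
      = ENNReal.ofReal ((1 - 1/Real.exp 1) * c) := by
    rw [show unifM = volume.restrict (Set.Icc 0 1) from rfl,
      ← ofReal_integral_eq_lintegral_ofReal]
    · congr 1
      rw [MeasureTheory.integral_Icc_eq_integral_Ioc,
        ← intervalIntegral.integral_of_le zero_le_one, intervalIntegral.integral_const_mul]
      have := integral_c_exp 1 1
      simp only [one_mul, mul_one] at this
      rw [this, Real.exp_neg]
      rw [inv_eq_one_div]
      ring
    · exact (Continuous.integrableOn_Icc (by continuity))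
    · exact ae_of_all _ fun y => mul_nonneg hc (Real.exp_pos _).le
  rw [← hcomp]
  refine lintegral_mono_ae ?_
  refine (ae_restrict_iff' measurableSet_Icc).2 (ae_of_all _ fun y hy => ?_)
  refine ENNReal.ofReal_le_ofReal (mul_le_mul_of_nonneg_left ?_ hc)
  exact Real.exp_le_exp.2 (by nlinarith [hy.1, hy.2])
lemma pi_unifM (k : ℕ) :
    (volume : Measure (Fin k → ℝ)).restrict (Set.pi Set.univ fun _ => Set.Icc 0 1)
      = Measure.pi fun _ : Fin k => unifM := by
  refine (Measure.pi_eq fun s hs => ?_).symm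
  rw [Measure.restrict_apply (MeasurableSet.univ_pi hs), ← Set.pi_inter_distrib, volume_pi,
    Measure.pi_pi]
  exact Finset.prod_congr rfl fun j _ => (Measure.restrict_apply (hs j)).symm

lemma cube_restrict (k : ℕ) :
    (volume : Measure ((Fin k → ℝ) × (Fin k → ℝ))).restrict
        {p : (Fin k → ℝ) × (Fin k → ℝ) |
          (∀ j, p.1 j ∈ Set.Icc (0:ℝ) 1) ∧ ∀ j, p.2 j ∈ Set.Icc (0:ℝ) 1}
      = (Measure.pi fun _ : Fin k => unifM).prod (Measure.pi fun _ : Fin k => unifM) := by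
  have hset : {p : (Fin k → ℝ) × (Fin k → ℝ) |
        (∀ j, p.1 j ∈ Set.Icc (0:ℝ) 1) ∧ ∀ j, p.2 j ∈ Set.Icc (0:ℝ) 1}
      = (Set.pi Set.univ fun _ : Fin k => Set.Icc (0:ℝ) 1) ×ˢ
          (Set.pi Set.univ fun _ : Fin k => Set.Icc (0:ℝ) 1) := by
    ext p
    simp only [Set.mem_setOf_eq, Set.mem_prod, Set.mem_pi, Set.mem_univ, forall_true_left]
  rw [hset, Measure.volume_eq_prod, ← Measure.prod_restrict, pi_unifM]

lemma ae_cube (k : ℕ) :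
    ∀ᵐ Y ∂(Measure.pi fun _ : Fin k => unifM), ∀ j, Y j ∈ Set.Icc (0:ℝ) 1 := by
  rw [ae_all_iff]
  intro j
  rw [ae_iff]
  have hset : {Y : Fin k → ℝ | ¬ Y j ∈ Set.Icc (0:ℝ) 1}
      = Set.pi Set.univ (fun l => if l = j then (Set.Icc (0:ℝ) 1)ᶜ else Set.univ) := by
    ext Y
    simp only [Set.mem_setOf_eq, Set.mem_pi, Set.mem_univ, forall_true_left]
    constructor
    · intro h l
      by_cases hl : l = j
      · subst hl; simp [h]
      · simp [hl]
    · intro h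
      have := h j
      simpa using this
  rw [hset, Measure.pi_pi]
  refine Finset.prod_eq_zero (Finset.mem_univ j) ?_
  rw [if_pos rfl, unifM, Measure.restrict_apply (measurableSet_Icc.compl)]
  simp

lemma measurable_u {k : ℕ} (z : Fin k → ℝ) (i : Fin k) :
    Measurable fun y : ℝ => ENNReal.ofReal (z i * Real.exp (-(y * z i))) :=
  (((Real.measurable_exp.comp ((measurable_id.mul_const (z i)).neg)).const_mul
    (z i))).ennreal_ofReal

lemma measurable_phi {k : ℕ} (z : Fin k → ℝ) (j : Fin k) :
    Measurable fun p : ℝ × ℝ =>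
      (if p.2 < p.1 then ENNReal.ofReal (1 - z j * Real.exp (-(p.2 * z j))) else 1) := by
  refine Measurable.ite (measurableSet_lt measurable_snd measurable_fst) ?_ measurable_const
  exact (measurable_const.sub ((Real.measurable_exp.comp
    ((measurable_snd.mul_const (z j)).neg)).const_mul (z j))).ennreal_ofReal

/-- (1 - 1/e)-selectability of the Lee–Singla random-order CRS for a rank-one
matroid.  Each element `j` draws an arrival time `Y j` uniform on `[0,1]` and an independent
uniform coin `U j`; the activeness pattern `A : Fin k → Bool` has `A j = true` with
probability `z j` independently.  Element `i` is selected iff it is active, its coin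
satisfies `U i ≤ exp(-Y i · z i)` (acceptance with probability `exp(-Y_i z_i)`), and no
element arriving earlier was active and accepted.  The (unconditional) probability that `i`
is selected is at least `(1 - 1/e) · z i`, i.e. at least `1 - 1/e` conditioned on `i` being
active.  The uniform randomness is modelled by Lebesgue measure on `((Fin k → ℝ) × (Fin k → ℝ))`
restricted to the cube `[0,1]^k × [0,1]^k`, the first coordinate being the arrival times `Y`
and the second the coins `U`. -/
theorem rcrs_one_minus_inv_e_selectable
    (k : ℕ) (z : Fin k → ℝ)
    (hz : ∀ j, z j ∈ Set.Icc (0 : ℝ) 1) (hsum : ∑ j, z j ≤ 1) (i : Fin k) :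
    (1 - 1 / Real.exp 1) * z i ≤
      ∑ A : Fin k → Bool,
        (∏ j, if A j then z j else 1 - z j) *
          ((MeasureTheory.volume.restrict
              {p : (Fin k → ℝ) × (Fin k → ℝ) |
                (∀ j, p.1 j ∈ Set.Icc (0 : ℝ) 1) ∧ ∀ j, p.2 j ∈ Set.Icc (0 : ℝ) 1})
            {p : (Fin k → ℝ) × (Fin k → ℝ) |
              A i = true ∧ p.2 i ≤ Real.exp (-(p.1 i * z i)) ∧
                ∀ j, p.1 j < p.1 i →
                  ¬(A j = true ∧ p.2 j ≤ Real.exp (-(p.1 j * z j)))}).toReal := by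
  classical
  have hzi0 : (0:ℝ) ≤ z i := (hz i).1
  have he1 : (1:ℝ) ≤ Real.exp 1 := by
    have := Real.add_one_le_exp (1:ℝ); linarith
  have hco : (0:ℝ) ≤ 1 - 1 / Real.exp 1 := by
    have : 1 / Real.exp 1 ≤ 1 := by
      rw [div_le_one (lt_of_lt_of_le one_pos he1)]; exact he1
    linarith
  have hw : ∀ (A : Fin k → Bool), (0:ℝ) ≤ ∏ j, if A j then z j else 1 - z j := by
    intro A
    refine Finset.prod_nonneg fun j _ => ?_
    by_cases h : A j <;> simp [h, (hz j).1, sub_nonneg.2 (hz j).2]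
  set π : Measure (Fin k → ℝ) := Measure.pi fun _ : Fin k => unifM with hπ
  set μ : Measure ((Fin k → ℝ) × (Fin k → ℝ)) := π.prod π with hμ
  have hfin : ∀ A : Fin k → Bool, μ (Ssel k z i A) ≠ ⊤ := fun A => measure_ne_top μ _
  -- the key inequality in ℝ≥0∞
  have key : ENNReal.ofReal ((1 - 1/Real.exp 1) * z i)
      ≤ ∑ A : Fin k → Bool,
          ENNReal.ofReal (∏ j, if A j then z j else 1 - z j) * μ (Ssel k z i A) := by
    have step1 : ∑ A : Fin k → Bool,
        ENNReal.ofReal (∏ j, if A j then z j else 1 - z j) * μ (Ssel k z i A)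
        = ∫⁻ Y, (∑ A : Fin k → Bool,
            ENNReal.ofReal (∏ j, if A j then z j else 1 - z j) *
              π (Prod.mk Y ⁻¹' Ssel k z i A)) ∂π := by
      rw [lintegral_finset_sum _ fun A _ =>
        (measurable_measure_prodMk_left (Ssel_measurable k z i A)).const_mul _]
      refine Finset.sum_congr rfl fun A _ => ?_
      rw [hμ, Measure.prod_apply (Ssel_measurable k z i A),
        lintegral_const_mul _ (measurable_measure_prodMk_left (Ssel_measurable k z i A))]
    have step2 : ∫⁻ Y, (∑ A : Fin k → Bool,
          ENNReal.ofReal (∏ j, if A j then z j else 1 - z j) *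
            π (Prod.mk Y ⁻¹' Ssel k z i A)) ∂π
        = ∫⁻ Y, (ENNReal.ofReal (z i * Real.exp (-(Y i * z i))) *
            ∏ j ∈ Finset.univ.erase i,
              (if Y j < Y i then ENNReal.ofReal (1 - z j * Real.exp (-(Y j * z j))) else 1)) ∂π :=
      lintegral_congr_ae ((ae_cube k).mono fun Y hY => sum_slice z i hz Y hY)
    have step3 : ∫⁻ Y, (ENNReal.ofReal (z i * Real.exp (-(Y i * z i))) *
            ∏ j ∈ Finset.univ.erase i,
              (if Y j < Y i then ENNReal.ofReal (1 - z j * Real.exp (-(Y j * z j))) else 1)) ∂π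
        = ∫⁻ y, (ENNReal.ofReal (z i * Real.exp (-(y * z i))) *
            ∏ j ∈ Finset.univ.erase i,
              ∫⁻ t, (if t < y then ENNReal.ofReal (1 - z j * Real.exp (-(t * z j))) else 1)
                ∂unifM) ∂unifM := by
      exact lintegral_pi_split i (fun y => ENNReal.ofReal (z i * Real.exp (-(y * z i))))
        (fun j y t => if t < y then ENNReal.ofReal (1 - z j * Real.exp (-(t * z j))) else 1)
        (measurable_u z i) (fun j => measurable_phi z j)
    have step4 : ∫⁻ y, (ENNReal.ofReal (z i * Real.exp (-(y * z i))) *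
            ∏ j ∈ Finset.univ.erase i,
              ∫⁻ t, (if t < y then ENNReal.ofReal (1 - z j * Real.exp (-(t * z j))) else 1)
                ∂unifM) ∂unifM
        = ∫⁻ y, ENNReal.ofReal (z i * Real.exp (-(y * ∑ j, z j))) ∂unifM := by
      refine lintegral_congr_ae ?_
      have hae : ∀ᵐ y ∂unifM, y ∈ Set.Icc (0:ℝ) 1 := by
        rw [show unifM = volume.restrict (Set.Icc 0 1) from rfl]
        exact ae_restrict_mem measurableSet_Icc
      refine hae.mono fun y hy => ?_
      dsimp only
      have hinner : ∀ j : Fin k,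
          (∫⁻ t, (if t < y then ENNReal.ofReal (1 - z j * Real.exp (-(t * z j))) else 1) ∂unifM)
            = ENNReal.ofReal (Real.exp (-(y * z j))) := fun j => inner_int (hz j) hy
      rw [Finset.prod_congr rfl fun j _ => hinner j,
        ← ENNReal.ofReal_prod_of_nonneg (fun j _ => (Real.exp_pos _).le),
        ← ENNReal.ofReal_mul (mul_nonneg hzi0 (Real.exp_pos _).le)]
      congr 1
      rw [mul_assoc, ← Real.exp_sum]
      have : -(y * z i) + ∑ j ∈ Finset.univ.erase i, -(y * z j)
          = -(y * ∑ j, z j) := by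
        rw [Finset.add_sum_erase _ (fun j => -(y * z j)) (Finset.mem_univ i),
          Finset.mul_sum, ← Finset.sum_neg_distrib]
      rw [← Real.exp_add, this]
    rw [step1, step2, step3, step4]
    exact last_step (z i) (∑ j, z j) hzi0 (Finset.sum_nonneg fun j _ => (hz j).1) hsum
  -- convert back to real numbers
  have hrw : ∀ A : Fin k → Bool,
      (∏ j, if A j then z j else 1 - z j) *
        ((volume.restrict
            {p : (Fin k → ℝ) × (Fin k → ℝ) |
              (∀ j, p.1 j ∈ Set.Icc (0 : ℝ) 1) ∧ ∀ j, p.2 j ∈ Set.Icc (0 : ℝ) 1})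
          {p : (Fin k → ℝ) × (Fin k → ℝ) |
            A i = true ∧ p.2 i ≤ Real.exp (-(p.1 i * z i)) ∧
              ∀ j, p.1 j < p.1 i →
                ¬(A j = true ∧ p.2 j ≤ Real.exp (-(p.1 j * z j)))}).toReal
      = (ENNReal.ofReal (∏ j, if A j then z j else 1 - z j) * μ (Ssel k z i A)).toReal := by
    intro A
    rw [cube_restrict k, ENNReal.toReal_mul, ENNReal.toReal_ofReal (hw A)]
    rfl
  rw [Finset.sum_congr rfl fun A _ => hrw A, ← ENNReal.toReal_sum
    (fun A _ => ENNReal.mul_ne_top ENNReal.ofReal_ne_top (hfin A))]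
  calc (1 - 1 / Real.exp 1) * z i
      = (ENNReal.ofReal ((1 - 1 / Real.exp 1) * z i)).toReal :=
        (ENNReal.toReal_ofReal (mul_nonneg hco hzi0)).symm
    _ ≤ _ := ENNReal.toReal_mono
        (by
          refine (ENNReal.sum_lt_top.2 fun A _ => ?_).ne
          exact (ENNReal.mul_ne_top ENNReal.ofReal_ne_top (hfin A)).lt_top) key
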